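/- For n ≥ 2, if A and B are convex bodies in ℝⁿ such that A can hide behind B, then vol(A) ≤ (n/(n−1))ⁿ · vol(B). -/

import Mathlib

open scoped Pointwise RealInnerProductSpace
open MeasureTheory

/-- Orthogonal projection of a point onto the hyperplane `u^⊥`. -/
noncomputable def proj {n : ℕ} (u x : EuclideanSpace ℝ (Fin n)) : EuclideanSpace ℝ (Fin n) :=
  (Submodule.orthogonalProjectionOnto (ℝ ∙ u)ᗮ x : EuclideanSpace ℝ (Fin n))

/-- `A` can hide behind `B`: for every unit direction `u` there is a translation vector in
`u^⊥` moving the shadow of `A` inside the shadow of `B`. -/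
def HidesBehind {n : ℕ} (A B : Set (EuclideanSpace ℝ (Fin n))) : Prop :=
  ∀ u : EuclideanSpace ℝ (Fin n), ‖u‖ = 1 →
    ∃ v ∈ (ℝ ∙ u)ᗮ, v +ᵥ (proj u '' A) ⊆ proj u '' B

namespace HidingProof

variable {n : ℕ}

local notation "E" => EuclideanSpace ℝ (Fin n)

/-- The support function of a set. -/
noncomputable def sF (S : Set (EuclideanSpace ℝ (Fin n))) (w : EuclideanSpace ℝ (Fin n)) : ℝ :=
  sSup ((fun x => ⟪x, w⟫) '' S)

lemma cont_inner (w : E) : Continuous fun x : E => ⟪x, w⟫ :=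
  continuous_id.inner continuous_const

lemma le_sF {S : Set E} (hS : IsCompact S) {x : E} (hx : x ∈ S) (w : E) :
    ⟪x, w⟫ ≤ sF S w :=
  le_csSup ((hS.image (cont_inner w)).bddAbove) ⟨x, hx, rfl⟩

lemma sF_le {S : Set E} (hne : S.Nonempty) {w : E} {c : ℝ}
    (h : ∀ x ∈ S, ⟪x, w⟫ ≤ c) : sF S w ≤ c :=
  csSup_le (hne.image _) (by rintro _ ⟨x, hx, rfl⟩; exact h x hx)

lemma exists_sF {S : Set E} (hS : IsCompact S) (hne : S.Nonempty) (w : E) :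
    ∃ x ∈ S, sF S w = ⟪x, w⟫ := by
  obtain ⟨x, hx, hmax⟩ := hS.exists_isMaxOn hne (cont_inner w).continuousOn
  exact ⟨x, hx, le_antisymm (sF_le hne hmax) (le_sF hS hx w)⟩

lemma sF_zero {S : Set E} (hS : IsCompact S) (hne : S.Nonempty) : sF S 0 = 0 := by
  obtain ⟨x, _, hx⟩ := exists_sF hS hne 0
  simp [hx]

lemma sF_add {S : Set E} (hS : IsCompact S) (hne : S.Nonempty) (w w' : E) :
    sF S (w + w') ≤ sF S w + sF S w' := by
  obtain ⟨x, hx, h⟩ := exists_sF hS hne (w + w')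
  rw [h, inner_add_right]
  exact add_le_add (le_sF hS hx w) (le_sF hS hx w')

lemma sF_smul {S : Set E} (hS : IsCompact S) (hne : S.Nonempty) {c : ℝ} (hc : 0 ≤ c) (w : E) :
    sF S (c • w) = c * sF S w := by
  refine le_antisymm ?_ ?_
  · obtain ⟨x, hx, h⟩ := exists_sF hS hne (c • w)
    rw [h, real_inner_smul_right]
    exact mul_le_mul_of_nonneg_left (le_sF hS hx w) hc
  · obtain ⟨x, hx, h⟩ := exists_sF hS hne w
    rw [h, ← real_inner_smul_right]
    exact le_sF hS hx _

lemma sF_sum {S : Set E} (hS : IsCompact S) (hne : S.Nonempty) {ι : Type*} (s : Finset ι)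
    (f : ι → E) : sF S (∑ i ∈ s, f i) ≤ ∑ i ∈ s, sF S (f i) := by
  classical
  induction s using Finset.induction_on with
  | empty => simp [sF_zero hS hne]
  | insert _ _ hnotmem ih =>
    rename_i a s
    rw [Finset.sum_insert hnotmem, Finset.sum_insert hnotmem]
    exact (sF_add hS hne _ _).trans (by linarith)

lemma sF_smulset {S : Set E} (hS : IsCompact S) (hne : S.Nonempty) {c : ℝ} (hc : 0 ≤ c) (w : E) :
    sF (c • S) w = c * sF S w := by
  have hS' : IsCompact (c • S) := hS.smul c
  have hne' : (c • S).Nonempty := hne.smul_set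
  refine le_antisymm ?_ ?_
  · refine sF_le hne' ?_
    rintro _ ⟨x, hx, rfl⟩
    rw [real_inner_smul_left]
    exact mul_le_mul_of_nonneg_left (le_sF hS hx w) hc
  · obtain ⟨x, hx, h⟩ := exists_sF hS hne w
    rw [h, ← real_inner_smul_left]
    exact le_sF hS' (Set.smul_mem_smul_set hx) _


lemma erase_swap {β : Type*} [AddCommMonoid β] {k : ℕ} (f : Fin k → Fin k → β) :
    ∑ m, ∑ i ∈ Finset.univ.erase m, f m i = ∑ i, ∑ m ∈ Finset.univ.erase i, f m i := by
  classical
  have h1 : ∀ m : Fin k, ∑ i ∈ Finset.univ.erase m, f m i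
      = ∑ i, (if i = m then 0 else f m i) := by
    intro m
    rw [← Finset.sum_erase (f := fun i => if i = m then 0 else f m i) (a := m) Finset.univ (by simp)]
    exact Finset.sum_congr rfl (fun i hi => by rw [if_neg (Finset.mem_erase.1 hi).1])
  have h2 : ∀ i : Fin k, ∑ m ∈ Finset.univ.erase i, f m i
      = ∑ m, (if i = m then 0 else f m i) := by
    intro i
    rw [← Finset.sum_erase (f := fun m => if i = m then 0 else f m i) (a := i) Finset.univ (by simp)]
    exact Finset.sum_congr rfl (fun m hm => by rw [if_neg (Ne.symm (Finset.mem_erase.1 hm).1)])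
  simp_rw [h1, h2]
  exact Finset.sum_comm

lemma core (hn : 2 ≤ n) {A B : Set E} (hA : IsCompact A) (hAne : A.Nonempty)
    (hB : IsCompact B) (hBne : B.Nonempty)
    (hyp : ∀ u : E, u ≠ 0 → ∃ v : E, ∀ z : E, ⟪u, z⟫ = 0 → sF A z ≤ sF B z + ⟪v, z⟫)
    (z : Fin (n + 1) → E) (hz : ∑ i, z i = 0) :
    ∑ i, sF A (z i) ≤ ((n : ℝ) / ((n : ℝ) - 1)) * ∑ i, sF B (z i) := by
  classical
  have hN2 : (2:ℝ) ≤ (n:ℝ) := by exact_mod_cast hn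
  have hN0 : (0:ℝ) < (n:ℝ) := by linarith
  have hNne : ((n:ℝ)) ≠ 0 := ne_of_gt hN0
  set c : ℝ := ((n:ℝ))⁻¹ with hcdef
  have hc0 : 0 ≤ c := by positivity
  have hnc : (n:ℝ) * c = 1 := mul_inv_cancel₀ hNne
  set y : Fin (n+1) → Fin (n+1) → E := fun m i => z i + c • z m with hy
  have hcard : ∀ m : Fin (n+1), (Finset.univ.erase m).card = n := by
    intro m
    rw [Finset.card_erase_of_mem (Finset.mem_univ m)]
    simp
  have hfam0 : ∀ m, ∑ i ∈ Finset.univ.erase m, y m i = 0 := by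
    intro m
    rw [hy]
    rw [Finset.sum_add_distrib, Finset.sum_erase_eq_sub (Finset.mem_univ m), hz,
      Finset.sum_const, hcard m, ← Nat.cast_smul_eq_nsmul ℝ, smul_smul, hnc, one_smul]
    abel
  -- hyperplane inequality for each family
  have hm : ∀ m, ∑ i ∈ Finset.univ.erase m, sF A (y m i)
      ≤ ∑ i ∈ Finset.univ.erase m, sF B (y m i) := by
    intro m
    haveI : Nontrivial (Fin (n+1)) := Fin.nontrivial_iff_two_le.mpr (by omega)
    obtain ⟨m', hm'⟩ := exists_ne m
    set T : Finset (Fin (n+1)) := (Finset.univ.erase m).erase m' with hT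
    have hm'mem : m' ∈ Finset.univ.erase m := Finset.mem_erase.2 ⟨hm', Finset.mem_univ _⟩
    set V := Submodule.span ℝ ((T.image (y m) : Finset (EuclideanSpace ℝ (Fin n))) : Set (EuclideanSpace ℝ (Fin n))) with hV
    have hmemV : ∀ i ∈ Finset.univ.erase m, y m i ∈ V := by
      intro i hi
      by_cases him : i = m'
      · subst him
        have hsplit : y m i + ∑ j ∈ T, y m j = 0 := by
          rw [hT, ← Finset.sum_insert (Finset.notMem_erase i _), Finset.insert_erase hm'mem]
          exact hfam0 m
        have hneg : y m i = - ∑ j ∈ T, y m j := eq_neg_of_add_eq_zero_left hsplit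
        rw [hneg]
        exact Submodule.neg_mem _ (Submodule.sum_mem _ (fun j hj =>
          Submodule.subset_span (Finset.mem_coe.2 (Finset.mem_image_of_mem _ hj))))
      · exact Submodule.subset_span (Finset.mem_coe.2 (Finset.mem_image_of_mem _
          (Finset.mem_erase.2 ⟨him, hi⟩)))
    have hVne : V ≠ ⊤ := by
      intro htop
      have h1 : Module.finrank ℝ V ≤ (T.image (y m)).card := finrank_span_finset_le_card _
      have h2 : (T.image (y m)).card ≤ T.card := Finset.card_image_le
      have h3 : T.card = n - 1 := by
        rw [hT, Finset.card_erase_of_mem hm'mem, hcard]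
      have h4 : Module.finrank ℝ V = n := by
        rw [htop, finrank_top, finrank_euclideanSpace_fin]
      omega
    have hbot : Vᗮ ≠ ⊥ := by
      intro hb
      exact hVne (Submodule.orthogonal_eq_bot_iff.1 hb)
    obtain ⟨u, huV, hu0⟩ := Submodule.exists_mem_ne_zero_of_ne_bot hbot
    have horth : ∀ i ∈ Finset.univ.erase m, ⟪u, y m i⟫ = 0 := by
      intro i hi
      rw [real_inner_comm]
      exact (Submodule.mem_orthogonal V u).1 huV _ (hmemV i hi)
    obtain ⟨v, hv⟩ := hyp u hu0
    calc ∑ i ∈ Finset.univ.erase m, sF A (y m i)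
        ≤ ∑ i ∈ Finset.univ.erase m, (sF B (y m i) + ⟪v, y m i⟫) :=
          Finset.sum_le_sum (fun i hi => hv _ (horth i hi))
      _ = ∑ i ∈ Finset.univ.erase m, sF B (y m i) := by
          rw [Finset.sum_add_distrib, ← inner_sum, hfam0 m, inner_zero_right, add_zero]
  have total : ∑ m, ∑ i ∈ Finset.univ.erase m, sF A (y m i)
      ≤ ∑ m, ∑ i ∈ Finset.univ.erase m, sF B (y m i) :=
    Finset.sum_le_sum (fun m _ => hm m)
  -- lower bound for the A side
  have hAmerge : ∀ i : Fin (n+1), ((n:ℝ) - c) * sF A (z i)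
      ≤ ∑ m ∈ Finset.univ.erase i, sF A (y m i) := by
    intro i
    have hsum : ∑ m ∈ Finset.univ.erase i, y m i = ((n:ℝ) - c) • z i := by
      rw [hy]
      rw [Finset.sum_add_distrib, Finset.sum_const, hcard i, ← Finset.smul_sum,
        Finset.sum_erase_eq_sub (Finset.mem_univ i), hz, zero_sub, ← Nat.cast_smul_eq_nsmul ℝ,
        smul_neg, sub_smul]
      abel
    calc ((n:ℝ) - c) * sF A (z i) = sF A (((n:ℝ) - c) • z i) := by
          rw [sF_smul hA hAne (by rw [hcdef]; nlinarith [inv_le_one_of_one_le₀ (by linarith : (1:ℝ) ≤ (n:ℝ))])]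
      _ = sF A (∑ m ∈ Finset.univ.erase i, y m i) := by rw [hsum]
      _ ≤ ∑ m ∈ Finset.univ.erase i, sF A (y m i) := sF_sum hA hAne _ _
  -- upper bound for the B side
  have hBsplit : ∀ m, ∑ i ∈ Finset.univ.erase m, sF B (y m i) ≤ ∑ i, sF B (z i) := by
    intro m
    have step : ∀ i ∈ Finset.univ.erase m, sF B (y m i) ≤ sF B (z i) + c * sF B (z m) := by
      intro i _
      calc sF B (y m i) ≤ sF B (z i) + sF B (c • z m) := sF_add hB hBne _ _
        _ = sF B (z i) + c * sF B (z m) := by rw [sF_smul hB hBne hc0]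
    calc ∑ i ∈ Finset.univ.erase m, sF B (y m i)
        ≤ ∑ i ∈ Finset.univ.erase m, (sF B (z i) + c * sF B (z m)) := Finset.sum_le_sum step
      _ = (∑ i ∈ Finset.univ.erase m, sF B (z i)) + (n:ℝ) * (c * sF B (z m)) := by
          rw [Finset.sum_add_distrib, Finset.sum_const, hcard m, nsmul_eq_mul]
      _ = ∑ i, sF B (z i) := by
          rw [Finset.sum_erase_eq_sub (Finset.mem_univ m), ← mul_assoc, hnc, one_mul]
          ring
  have hRHS : ∑ m, ∑ i ∈ Finset.univ.erase m, sF B (y m i)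
      ≤ ((n:ℝ)+1) * ∑ i, sF B (z i) := by
    calc ∑ m, ∑ i ∈ Finset.univ.erase m, sF B (y m i)
        ≤ ∑ _m : Fin (n+1), ∑ i, sF B (z i) := Finset.sum_le_sum (fun m _ => hBsplit m)
      _ = ((n:ℝ)+1) * ∑ i, sF B (z i) := by
          rw [Finset.sum_const, Finset.card_univ, Fintype.card_fin, nsmul_eq_mul]
          push_cast
          ring
  have hLHS : ((n:ℝ) - c) * ∑ i, sF A (z i)
      ≤ ∑ m, ∑ i ∈ Finset.univ.erase m, sF A (y m i) := by
    rw [erase_swap (fun m i => sF A (y m i)), Finset.mul_sum]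
    exact Finset.sum_le_sum (fun i _ => hAmerge i)
  have key : ((n:ℝ) - c) * ∑ i, sF A (z i) ≤ ((n:ℝ)+1) * ∑ i, sF B (z i) :=
    le_trans hLHS (le_trans total hRHS)
  -- final algebra
  set SA := ∑ i, sF A (z i)
  set SB := ∑ i, sF B (z i)
  have hNc : (n:ℝ) * ((n:ℝ) - c) = (n:ℝ)*(n:ℝ) - 1 := by
    rw [mul_sub, hnc]
  have k2 : ((n:ℝ)*(n:ℝ) - 1) * SA ≤ ((n:ℝ)+1) * ((n:ℝ) * SB) := by
    calc ((n:ℝ)*(n:ℝ)-1) * SA = (n:ℝ) * (((n:ℝ) - c) * SA) := by rw [← mul_assoc, hNc]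
      _ ≤ (n:ℝ) * (((n:ℝ)+1) * SB) := mul_le_mul_of_nonneg_left key hN0.le
      _ = ((n:ℝ)+1) * ((n:ℝ)*SB) := by ring
  have h1 : (0:ℝ) < (n:ℝ) - 1 := by linarith
  rw [div_mul_eq_mul_div, le_div_iff₀ h1]
  have k3 : (SA * ((n:ℝ)-1)) * ((n:ℝ)+1) ≤ ((n:ℝ) * SB) * ((n:ℝ)+1) := by nlinarith [k2]
  exact le_of_mul_le_mul_right k3 (by linarith)


lemma hyp_of_hides {A B : Set E} (hAne : A.Nonempty) (hBcp : IsCompact B)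
    (hAB : HidesBehind A B) :
    ∀ u : E, u ≠ 0 → ∃ v : E, ∀ z : E, ⟪u, z⟫ = 0 → sF A z ≤ sF B z + ⟪v, z⟫ := by
  intro u hu
  have hun : ‖u‖ ≠ 0 := norm_ne_zero_iff.mpr hu
  set u' : E := ‖u‖⁻¹ • u with hu'def
  have hu' : ‖u'‖ = 1 := by
    rw [hu'def, norm_smul, norm_inv, norm_norm, inv_mul_cancel₀ hun]
  obtain ⟨v, hvmem, hsub⟩ := hAB u' hu'
  refine ⟨-v, ?_⟩
  intro z hz
  have hz' : z ∈ (ℝ ∙ u')ᗮ := by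
    rw [Submodule.mem_orthogonal_singleton_iff_inner_right]
    rw [hu'def, real_inner_smul_left, hz, mul_zero]
  have hproj : ∀ x : E, ⟪proj u' x, z⟫ = ⟪x, z⟫ := by
    intro x
    have hmem : x - proj u' x ∈ ((ℝ ∙ u')ᗮ)ᗮ := Submodule.sub_starProjection_mem_orthogonal (K := (ℝ ∙ u')ᗮ) x
    have h0 : ⟪z, x - proj u' x⟫ = 0 :=
      (Submodule.mem_orthogonal _ _).1 hmem z hz'
    rw [inner_sub_right] at h0
    have h1 := sub_eq_zero.mp h0
    rw [real_inner_comm, ← h1]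
    exact real_inner_comm x z
  refine sF_le hAne ?_
  intro a ha
  have hmem : v +ᵥ proj u' a ∈ proj u' '' B := by
    apply hsub
    exact Set.vadd_mem_vadd_set (Set.mem_image_of_mem _ ha)
  obtain ⟨b, hb, heq⟩ := hmem
  have h1 : ⟪b, z⟫ = ⟪v, z⟫ + ⟪a, z⟫ := by
    rw [← hproj b, heq]
    have : (v +ᵥ proj u' a) = v + proj u' a := rfl
    rw [this, inner_add_left, hproj a]
  have h2 : ⟪b, z⟫ ≤ sF B z := le_sF hBcp hb z
  rw [inner_neg_left]
  linarith


/-- Packing a small indexed family into `Fin (n+1)`. -/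
lemma pack_exists {ι : Type} [Fintype ι] [Nonempty ι] (hcard : Fintype.card ι ≤ n + 1)
    (wt : ι → ℝ) (zf : ι → EuclideanSpace ℝ (Fin n)) :
    ∃ (c : Fin (n+1) → ℝ) (v : Fin (n+1) → EuclideanSpace ℝ (Fin n)),
      (∀ i, ∃ j, v i = zf j) ∧
      (∀ i, c i = 0 ∨ ∃ j, c i = wt j ∧ v i = zf j) ∧
      (∀ (M : Type) (_ : AddCommMonoid M) (G : ℝ → EuclideanSpace ℝ (Fin n) → M),
        (∀ x, G 0 x = 0) → ∑ i, G (c i) (v i) = ∑ j, G (wt j) (zf j)) := by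
  classical
  set N := Fintype.card ι with hN
  set e := Fintype.equivFin ι with he
  obtain ⟨j₀⟩ := ‹Nonempty ι›
  refine ⟨fun i => if h : (i : ℕ) < N then wt (e.symm ⟨i, h⟩) else 0,
          fun i => if h : (i : ℕ) < N then zf (e.symm ⟨i, h⟩) else zf j₀, ?_, ?_, ?_⟩
  · intro i
    by_cases h : (i : ℕ) < N
    · exact ⟨e.symm ⟨i, h⟩, by simp only [dif_pos h]⟩
    · exact ⟨j₀, by simp only [dif_neg h]⟩
  · intro i
    by_cases h : (i : ℕ) < N
    · exact Or.inr ⟨e.symm ⟨i, h⟩, by simp only [dif_pos h], by simp only [dif_pos h]⟩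
    · exact Or.inl (by simp only [dif_neg h])
  · intro M hM G hG0
    set F : ℕ → M := fun k => if h : k < N then G (wt (e.symm ⟨k, h⟩)) (zf (e.symm ⟨k, h⟩)) else 0
      with hF
    have step1 : ∀ i : Fin (n+1),
        G ((if h : (i : ℕ) < N then wt (e.symm ⟨i, h⟩) else 0))
          ((if h : (i : ℕ) < N then zf (e.symm ⟨i, h⟩) else zf j₀)) = F (i : ℕ) := by
      intro i
      by_cases h : (i : ℕ) < N
      · simp only [hF, dif_pos h]
      · simp only [hF, dif_neg h]; exact hG0 _
    calc ∑ i : Fin (n+1), G _ _ = ∑ i : Fin (n+1), F (i : ℕ) := Finset.sum_congr rfl (fun i _ => step1 i)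
      _ = ∑ k ∈ Finset.range (n+1), F k := Fin.sum_univ_eq_sum_range F (n+1)
      _ = ∑ k ∈ Finset.range N, F k := by
          refine (Finset.sum_subset (Finset.range_subset_range.2 hcard) ?_).symm
          intro k _ hk
          have hk' : ¬ k < N := by simpa using hk
          simp only [hF, dif_neg hk']
      _ = ∑ j : Fin N, F (j : ℕ) := (Fin.sum_univ_eq_sum_range F N).symm
      _ = ∑ j : Fin N, G (wt (e.symm j)) (zf (e.symm j)) := by
          refine Finset.sum_congr rfl (fun j _ => ?_)
          simp only [hF, dif_pos j.isLt, Fin.eta]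
      _ = ∑ j : ι, G (wt j) (zf j) := Equiv.sum_comp e.symm (fun j => G (wt j) (zf j))

/-- Convex hull of a compact set is compact (finite dimension). -/
lemma compact_hull {W : Set (EuclideanSpace ℝ (Fin n))} (hW : IsCompact W) (hne : W.Nonempty) :
    IsCompact (convexHull ℝ W) := by
  classical
  obtain ⟨w₀, hw₀⟩ := hne
  set Φ : (Fin (n+1) → ℝ) × (Fin (n+1) → EuclideanSpace ℝ (Fin n)) → EuclideanSpace ℝ (Fin n) :=
    fun p => ∑ i, p.1 i • p.2 i with hΦdef
  have hΦ : Continuous Φ := by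
    apply continuous_finset_sum
    intro i _
    exact ((continuous_apply i).comp continuous_fst).smul ((continuous_apply i).comp continuous_snd)
  set K := (stdSimplex ℝ (Fin (n+1))).prod (Set.pi Set.univ (fun _ : Fin (n+1) => W)) with hK
  have hKcp : IsCompact K := (isCompact_stdSimplex _ _).prod (isCompact_univ_pi (fun _ => hW))
  have himg : convexHull ℝ W = Φ '' K := by
    apply Set.Subset.antisymm
    · intro x hx
      obtain ⟨ι, hι, zf, wt, hrange, hai, hpos, hsum, hcomb⟩ :=
        eq_pos_convex_span_of_mem_convexHull hx
      have hne' : Nonempty ι := by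
        by_contra hemp
        rw [not_nonempty_iff] at hemp
        haveI := hemp
        simp at hsum
      have hcard : Fintype.card ι ≤ n + 1 := by
        have h1 := hai.card_le_finrank_succ
        have h2 : Module.finrank ℝ (vectorSpan ℝ (Set.range zf)) ≤ n := by
          have h3 := Submodule.finrank_le (vectorSpan ℝ (Set.range zf))
          rwa [finrank_euclideanSpace_fin] at h3
        omega
      obtain ⟨c, v, hv, hcv, htrans⟩ := pack_exists hcard wt zf
      have hcomb' : Φ (c, v) = x :=
        (htrans (EuclideanSpace ℝ (Fin n)) inferInstance (fun a b => a • b)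
          (fun b => zero_smul ℝ b)).trans hcomb
      have hcsum : ∑ i, c i = 1 :=
        (htrans ℝ inferInstance (fun a _ => a) (fun _ => rfl)).trans hsum
      refine ⟨(c, v), ⟨?_, ?_⟩, hcomb'⟩
      · constructor
        · intro i
          show 0 ≤ c i
          rcases hcv i with h0 | ⟨j, hj, _⟩
          · rw [h0]
          · rw [hj]; exact (hpos j).le
        · exact hcsum
      · intro i _
        show v i ∈ W
        obtain ⟨j, hj⟩ := hv i
        rw [hj]
        exact hrange (Set.mem_range_self j)
    · rintro _ ⟨⟨cc, vv⟩, ⟨hc, hv⟩, rfl⟩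
      have hc1 : ∑ i, cc i = 1 := hc.2
      have hmem := Finset.centerMass_mem_convexHull (Finset.univ)
        (fun i _ => hc.1 i) (by rw [hc1]; norm_num)
        (fun i _ => hv i (Set.mem_univ i))
      rwa [Finset.centerMass_eq_of_sum_1 _ _ hc1] at hmem
  rw [himg]
  exact hKcp.image hΦ


set_option maxHeartbeats 1000000 in
lemma exists_translate {A C : Set (EuclideanSpace ℝ (Fin n))}
    (hA : IsCompact A) (hAne : A.Nonempty)
    (hC : IsCompact C) (hCne : C.Nonempty) (hCconv : Convex ℝ C)
    (key : ∀ z : Fin (n+1) → EuclideanSpace ℝ (Fin n), ∑ i, z i = 0 →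
      ∑ i, sF A (z i) ≤ ∑ i, sF C (z i)) :
    ∃ t : EuclideanSpace ℝ (Fin n), A ⊆ t +ᵥ C := by
  classical
  -- nearest point projection onto C
  have hproj : ∀ y : E, ∃ p, p ∈ C ∧ Metric.infDist y C = dist y p :=
    fun y => hC.exists_infDist_eq_dist hCne y
  choose pC hpC hpd using hproj
  -- variational characterization of the projection
  have hvar : ∀ y : E, ∀ q ∈ C, ⟪y - pC y, q - pC y⟫ ≤ 0 := by
    intro y q hq
    set p := pC y with hp
    set a := y - p with ha
    set b := q - p with hb
    have hseg : ∀ s : ℝ, 0 < s → s ≤ 1 → ‖a‖ ≤ ‖a - s • b‖ := by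
      intro s hs0 hs1
      have hmem : p + s • b ∈ C := by
        have h2 := hCconv (hpC y) hq (a := 1 - s) (b := s) (by linarith) hs0.le (by ring)
        have h3 : (1 - s) • p + s • q = p + s • b := by
          rw [hb, smul_sub, sub_smul, one_smul]
          abel
        rwa [h3] at h2
      have h4 : Metric.infDist y C ≤ dist y (p + s • b) := Metric.infDist_le_dist_of_mem hmem
      rw [hpd y] at h4
      rw [dist_eq_norm, dist_eq_norm] at h4
      have h5 : y - (p + s • b) = a - s • b := by rw [ha]; abel
      rwa [h5] at h4
    by_contra hcon
    push_neg at hcon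
    set s := min 1 (⟪a, b⟫ / (‖b‖ ^ 2 + 1)) with hs
    have hs0 : 0 < s := lt_min one_pos (div_pos hcon (by positivity))
    have hs1 : s ≤ 1 := min_le_left _ _
    have h2 := hseg s hs0 hs1
    have hsq : ‖a‖ ^ 2 ≤ ‖a - s • b‖ ^ 2 := pow_le_pow_left₀ (norm_nonneg a) h2 2
    have hexp : ‖a - s • b‖ ^ 2 = ‖a‖ ^ 2 - 2 * (s * ⟪a, b⟫) + s^2 * ‖b‖^2 := by
      rw [norm_sub_sq_real, real_inner_smul_right, norm_smul, Real.norm_eq_abs,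
        abs_of_pos hs0, mul_pow]
    rw [hexp] at hsq
    have e1 : 2 * (s * ⟪a, b⟫) ≤ s ^ 2 * ‖b‖ ^ 2 := by nlinarith [hsq]
    have e2 : 2 * ⟪a, b⟫ ≤ s * ‖b‖ ^ 2 := by
      have e2' : s * (2 * ⟪a, b⟫) ≤ s * (s * ‖b‖ ^ 2) := by nlinarith [e1]
      exact le_of_mul_le_mul_left e2' hs0
    have hs2 : s ≤ ⟪a, b⟫ / (‖b‖ ^ 2 + 1) := min_le_right _ _
    have e3 : s * (‖b‖ ^ 2 + 1) ≤ ⟪a, b⟫ := (le_div_iff₀ (by positivity)).mp hs2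
    nlinarith [e2, e3, hs0]
  -- support point of C in the outward direction
  have hsupp : ∀ y : E, sF C (y - pC y) = ⟪pC y, y - pC y⟫ := by
    intro y
    refine le_antisymm (sF_le hCne ?_) (le_sF hC (hpC y) _)
    intro q hq
    have h := hvar y q hq
    have h2 : ⟪q - pC y, y - pC y⟫ ≤ 0 := by rw [real_inner_comm]; exact h
    rw [inner_sub_left] at h2
    linarith
  -- the projection is 1-Lipschitz
  have hlip : ∀ y₁ y₂ : E, dist (pC y₁) (pC y₂) ≤ dist y₁ y₂ := by
    intro y₁ y₂
    have h1 := hvar y₁ (pC y₂) (hpC y₂)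
    have h2 := hvar y₂ (pC y₁) (hpC y₁)
    set p₁ := pC y₁
    set p₂ := pC y₂
    have expand : ⟪y₁ - p₁, p₂ - p₁⟫ + ⟪y₂ - p₂, p₁ - p₂⟫
        = ‖p₁ - p₂‖ ^ 2 - ⟪y₁ - y₂, p₁ - p₂⟫ := by
      rw [← real_inner_self_eq_norm_sq]
      simp only [inner_sub_left, inner_sub_right]
      rw [real_inner_comm p₂ p₁]
      ring
    have e2 : ‖p₁ - p₂‖ ^ 2 ≤ ⟪y₁ - y₂, p₁ - p₂⟫ := by
      have e := add_nonpos h1 h2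
      rw [expand] at e
      linarith
    rcases eq_or_ne (p₁ - p₂) 0 with hz | hz
    · rw [dist_eq_norm, hz, norm_zero]
      exact dist_nonneg
    · have hCS : ⟪y₁ - y₂, p₁ - p₂⟫ ≤ ‖y₁ - y₂‖ * ‖p₁ - p₂‖ := real_inner_le_norm _ _
      have hpos : 0 < ‖p₁ - p₂‖ := norm_pos_iff.mpr hz
      rw [dist_eq_norm, dist_eq_norm]
      nlinarith [e2, hCS, hpos]
  have hpCcont : Continuous pC := by
    have hl : LipschitzWith 1 pC := LipschitzWith.of_dist_le_mul (fun a b => by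
      rw [NNReal.coe_one, one_mul]; exact hlip a b)
    exact hl.continuous
  -- the function to minimize
  set D : EuclideanSpace ℝ (Fin n) → EuclideanSpace ℝ (Fin n) → ℝ :=
    fun t x => Metric.infDist (x - t) C with hD
  have hDcont : ∀ t, Continuous (fun x => D t x) := fun t =>
    (Metric.continuous_infDist_pt C).comp (continuous_id.sub continuous_const)
  set g : EuclideanSpace ℝ (Fin n) → ℝ := fun t => sSup ((fun x => D t x) '' A) with hg
  have hgle : ∀ t x, x ∈ A → D t x ≤ g t := fun t x hx =>
    le_csSup ((hA.image (hDcont t)).bddAbove) ⟨x, hx, rfl⟩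
  have hgmax : ∀ t, ∃ x ∈ A, g t = D t x := by
    intro t
    obtain ⟨x, hx, hmax⟩ := hA.exists_isMaxOn hAne (hDcont t).continuousOn
    refine ⟨x, hx, le_antisymm (csSup_le (hAne.image _) ?_) (hgle t x hx)⟩
    rintro _ ⟨x', hx', rfl⟩
    exact hmax hx'
  have hgnonneg : ∀ t, 0 ≤ g t := by
    intro t
    obtain ⟨x, hx, hval⟩ := hgmax t
    rw [hval]
    exact Metric.infDist_nonneg
  -- g is 1-Lipschitz, hence continuous
  have hglip : ∀ t₁ t₂, g t₁ ≤ g t₂ + dist t₁ t₂ := by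
    intro t₁ t₂
    obtain ⟨x, hx, hval⟩ := hgmax t₁
    rw [hval]
    have h1 : D t₁ x ≤ D t₂ x + dist (x - t₁) (x - t₂) := Metric.infDist_le_infDist_add_dist
    have h2 : dist (x - t₁) (x - t₂) = dist t₁ t₂ := by
      rw [dist_eq_norm, dist_eq_norm]
      have : x - t₁ - (x - t₂) = t₂ - t₁ := by abel
      rw [this, norm_sub_rev]
    rw [h2] at h1
    exact h1.trans (add_le_add_left (hgle t₂ x hx) _)
  have hgcont : Continuous g := by
    have hl : LipschitzWith 1 g := LipschitzWith.of_dist_le_mul (fun t₁ t₂ => by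
      rw [NNReal.coe_one, one_mul, Real.dist_eq, abs_sub_le_iff]
      constructor
      · linarith [hglip t₁ t₂]
      · rw [dist_comm]
        linarith [hglip t₂ t₁])
    exact hl.continuous
  -- minimize g
  obtain ⟨RC, hRC⟩ := hC.isBounded.subset_closedBall 0
  have hRC0 : 0 ≤ RC := by
    obtain ⟨q, hq⟩ := hCne
    have := hRC hq
    rw [Metric.mem_closedBall, dist_zero_right] at this
    linarith [norm_nonneg q]
  obtain ⟨x₀, hx₀⟩ := id hAne
  have hcoer : ∀ t : EuclideanSpace ℝ (Fin n), ‖x₀ - t‖ - RC ≤ g t := by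
    intro t
    refine le_trans ?_ (hgle t x₀ hx₀)
    have h1 : D t x₀ = dist (x₀ - t) (pC (x₀ - t)) := hpd (x₀ - t)
    have h2 : ‖pC (x₀ - t)‖ ≤ RC := by
      have := hRC (hpC (x₀ - t))
      rwa [Metric.mem_closedBall, dist_zero_right] at this
    have h3 := norm_sub_norm_le (x₀ - t) (pC (x₀ - t))
    rw [h1, dist_eq_norm]
    linarith
  set R := g 0 + RC + ‖x₀‖ + 1 with hR
  have hR0 : (0:ℝ) ≤ R := by
    have := hgnonneg 0
    have := norm_nonneg x₀
    rw [hR]; linarith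
  have h0mem : (0:EuclideanSpace ℝ (Fin n)) ∈ Metric.closedBall (0:EuclideanSpace ℝ (Fin n)) R := by
    rw [Metric.mem_closedBall, dist_self]; exact hR0
  obtain ⟨tstar, htmem, htmin⟩ := (isCompact_closedBall (0:EuclideanSpace ℝ (Fin n)) R).exists_isMinOn
    ⟨0, h0mem⟩ hgcont.continuousOn
  have hglobal : ∀ t : EuclideanSpace ℝ (Fin n), g tstar ≤ g t := by
    intro t
    by_cases ht : t ∈ Metric.closedBall (0:EuclideanSpace ℝ (Fin n)) R
    · exact htmin ht
    · have h1 : R < ‖t‖ := by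
        rw [Metric.mem_closedBall, dist_zero_right, not_le] at ht
        exact ht
      have h3 : ‖t‖ - ‖x₀‖ ≤ ‖x₀ - t‖ := by
        have h := norm_sub_norm_le t x₀
        rw [norm_sub_rev x₀ t]
        linarith
      have h2 : g 0 ≤ g t := by
        have := hcoer t
        rw [hR] at h1
        linarith
      exact le_trans (htmin h0mem) h2
  set lam := g tstar with hlamdef
  rcases le_or_gt lam 0 with hlam | hlampos
  · -- the minimum is zero : containment
    refine ⟨tstar, ?_⟩
    intro x hx
    have h1 : D tstar x = 0 :=
      le_antisymm (le_trans (hgle tstar x hx) hlam) Metric.infDist_nonneg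
    have h2 : x - tstar ∈ C := by
      rw [hC.isClosed.mem_iff_infDist_zero hCne]
      exact h1
    exact ⟨x - tstar, h2, by show tstar + (x - tstar) = x; abel⟩
  -- the minimum is positive : contradiction
  exfalso
  set Astar := {x ∈ A | D tstar x = lam} with hAstar
  have hAstarne : Astar.Nonempty := by
    obtain ⟨x, hx, hval⟩ := hgmax tstar
    exact ⟨x, hx, hval.symm⟩
  have hAstarcp : IsCompact Astar := by
    have heq : Astar = A ∩ (fun x => D tstar x) ⁻¹' {lam} := rfl
    rw [heq]
    exact hA.inter_right ((isClosed_singleton).preimage (hDcont tstar))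
  have hAstarA : Astar ⊆ A := fun x hx => hx.1
  -- the outward unit normal at x
  set w : EuclideanSpace ℝ (Fin n) → EuclideanSpace ℝ (Fin n) :=
    fun x => ‖(x - tstar) - pC (x - tstar)‖⁻¹ • ((x - tstar) - pC (x - tstar)) with hwdef
  have hDnorm : ∀ x : EuclideanSpace ℝ (Fin n), D tstar x = ‖(x - tstar) - pC (x - tstar)‖ := by
    intro x
    rw [hD]
    simp only []
    rw [hpd (x - tstar), dist_eq_norm]
  set W := w '' Astar with hW
  have hWne : W.Nonempty := hAstarne.image w
  have hFcont : Continuous (fun x : EuclideanSpace ℝ (Fin n) => (x - tstar) - pC (x - tstar)) := by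
    have h1 : Continuous (fun x : EuclideanSpace ℝ (Fin n) => x - tstar) :=
      continuous_id.sub continuous_const
    exact h1.sub (hpCcont.comp h1)
  have hwcontAt : ∀ x : EuclideanSpace ℝ (Fin n), D tstar x ≠ 0 → ContinuousAt w x := by
    intro x hx
    have hnz : ‖(x - tstar) - pC (x - tstar)‖ ≠ 0 := by rw [← hDnorm]; exact hx
    exact ((hFcont.norm.continuousAt).inv₀ hnz).smul hFcont.continuousAt
  have hWcp : IsCompact W := by
    refine hAstarcp.image_of_continuousOn ?_
    intro x hx
    exact ((hwcontAt x (by rw [hx.2]; exact ne_of_gt hlampos)).continuousWithinAt)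
  -- decompose y - p = D • w
  have hsplit : ∀ x : EuclideanSpace ℝ (Fin n), D tstar x ≠ 0 →
      (x - tstar) - pC (x - tstar) = ‖(x - tstar) - pC (x - tstar)‖ • w x := by
    intro x hx
    have hnz : ‖(x - tstar) - pC (x - tstar)‖ ≠ 0 := by rw [← hDnorm]; exact hx
    rw [hwdef]
    simp only []
    rw [smul_smul, mul_inv_cancel₀ hnz, one_smul]
  by_cases h0W : (0 : EuclideanSpace ℝ (Fin n)) ∈ convexHull ℝ W
  · -- Caratheodory case
    obtain ⟨ι, hι, zf, wt, hrange, hai, hpos, hsum, hcomb⟩ :=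
      eq_pos_convex_span_of_mem_convexHull h0W
    have hne' : Nonempty ι := by
      by_contra hemp
      rw [not_nonempty_iff] at hemp
      haveI := hemp
      simp at hsum
    have hcard : Fintype.card ι ≤ n + 1 := by
      have h1 := hai.card_le_finrank_succ
      have h2 : Module.finrank ℝ (vectorSpan ℝ (Set.range zf)) ≤ n := by
        have h3 := Submodule.finrank_le (vectorSpan ℝ (Set.range zf))
        rwa [finrank_euclideanSpace_fin] at h3
      omega
    obtain ⟨c, v, hv, hcv, htrans⟩ := pack_exists hcard wt zf
    have hzzsum : ∑ i, c i • v i = 0 :=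
      (htrans (EuclideanSpace ℝ (Fin n)) inferInstance (fun a b => a • b)
        (fun b => zero_smul ℝ b)).trans hcomb
    have hkey := key (fun i => c i • v i) hzzsum
    have hArw : ∑ i, sF A (c i • v i) = ∑ j, wt j * sF A (zf j) := by
      have h1 := htrans ℝ inferInstance (fun a b => sF A (a • b))
        (fun b => by show sF A ((0:ℝ) • b) = 0; rw [zero_smul]; exact sF_zero hA hAne)
      exact h1.trans (Finset.sum_congr rfl (fun j _ => sF_smul hA hAne (hpos j).le _))
    have hCrw : ∑ i, sF C (c i • v i) = ∑ j, wt j * sF C (zf j) := by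
      have h1 := htrans ℝ inferInstance (fun a b => sF C (a • b))
        (fun b => by show sF C ((0:ℝ) • b) = 0; rw [zero_smul]; exact sF_zero hC hCne)
      exact h1.trans (Finset.sum_congr rfl (fun j _ => sF_smul hC hCne (hpos j).le _))
    -- pointwise lower bound at active points
    have hlb : ∀ j : ι, ⟪tstar, zf j⟫ + sF C (zf j) + lam ≤ sF A (zf j) := by
      intro j
      obtain ⟨x, hxAstar, hxw⟩ := hrange (Set.mem_range_self j)
      obtain ⟨hxA, hxD⟩ := hxAstar
      set y := x - tstar with hy
      set p := pC y with hpdef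
      have hyp : D tstar x = ‖y - p‖ := hDnorm x
      have hDne : D tstar x ≠ 0 := by rw [hxD]; exact ne_of_gt hlampos
      have hnz : ‖y - p‖ ≠ 0 := by rw [← hyp]; exact hDne
      have hlamval : ‖y - p‖ = lam := by rw [← hyp]; exact hxD
      have hsp := hsplit x hDne
      have e1 : ⟪x, w x⟫ = ⟪tstar, w x⟫ + ⟪y, w x⟫ := by
        have : (x : EuclideanSpace ℝ (Fin n)) = tstar + y := by rw [hy]; abel
        rw [this, inner_add_left]
      have e2 : ⟪y, w x⟫ = ⟪p, w x⟫ + ⟪y - p, w x⟫ := by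
        have h3 : ⟪p, w x⟫ + ⟪y - p, w x⟫ = ⟪p + (y - p), w x⟫ := (inner_add_left _ _ _).symm
        have h4 : p + (y - p) = y := by abel
        rw [h3, h4]
      have e3 : ⟪y - p, w x⟫ = ‖y - p‖ := by
        rw [hwdef]
        simp only []
        rw [real_inner_smul_right, real_inner_self_eq_norm_sq]
        rw [← hy, ← hpdef]
        field_simp
      have e4 : ⟪p, w x⟫ = sF C (w x) := by
        have h5 := hsupp y
        have h6 : sF C (w x) = ‖y - p‖⁻¹ * sF C (y - p) := by
          rw [hwdef]
          simp only []
          rw [← hy, ← hpdef]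
          exact sF_smul hC hCne (by positivity) _
        rw [h6, h5, ← hpdef]
        rw [hwdef]
        simp only []
        rw [← hy, ← hpdef, real_inner_smul_right]
      have e5 : ⟪x, w x⟫ = ⟪tstar, w x⟫ + sF C (w x) + lam := by
        rw [e1, e2, e3, e4, hlamval]
        ring
      have e6 : ⟪x, w x⟫ ≤ sF A (w x) := le_sF hA hxA _
      rw [← hxw]
      linarith [e5, e6]
    -- sum up the pointwise bounds
    have hsum1 : ∑ j, wt j * (⟪tstar, zf j⟫ + sF C (zf j) + lam)
        ≤ ∑ j, wt j * sF A (zf j) :=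
      Finset.sum_le_sum (fun j _ => mul_le_mul_of_nonneg_left (hlb j) (hpos j).le)
    have hsum2 : ∑ j, wt j * ⟪tstar, zf j⟫ = 0 := by
      have h7 : ⟪tstar, ∑ j, wt j • zf j⟫ = ∑ j, wt j * ⟪tstar, zf j⟫ := by
        rw [inner_sum]
        exact Finset.sum_congr rfl (fun j _ => real_inner_smul_right _ _ _)
      rw [hcomb, inner_zero_right] at h7
      exact h7.symm
    have hexpand : ∑ j, wt j * (⟪tstar, zf j⟫ + sF C (zf j) + lam)
        = (∑ j, wt j * ⟪tstar, zf j⟫) + (∑ j, wt j * sF C (zf j)) + lam := by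
      calc ∑ j, wt j * (⟪tstar, zf j⟫ + sF C (zf j) + lam)
          = ∑ j, (wt j * ⟪tstar, zf j⟫ + wt j * sF C (zf j) + wt j * lam) :=
            Finset.sum_congr rfl (fun j _ => by ring)
        _ = (∑ j, (wt j * ⟪tstar, zf j⟫ + wt j * sF C (zf j))) + ∑ j, wt j * lam :=
            Finset.sum_add_distrib
        _ = (∑ j, wt j * ⟪tstar, zf j⟫) + (∑ j, wt j * sF C (zf j)) + ∑ j, wt j * lam := by
            rw [Finset.sum_add_distrib]
        _ = (∑ j, wt j * ⟪tstar, zf j⟫) + (∑ j, wt j * sF C (zf j)) + lam := by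
            rw [← Finset.sum_mul, hsum, one_mul]
    rw [hArw, hCrw] at hkey
    rw [hexpand, hsum2, zero_add] at hsum1
    linarith
  · -- separation case
    have hhullcp : IsCompact (convexHull ℝ W) := compact_hull hWcp hWne
    obtain ⟨f, u₀, hfu, hfW⟩ := geometric_hahn_banach_point_closed
      (convex_convexHull ℝ W) hhullcp.isClosed h0W
    have hu₀ : 0 < u₀ := by
      have h8 : f 0 = 0 := map_zero f
      rw [h8] at hfu
      exact hfu
    set d : EuclideanSpace ℝ (Fin n) := (InnerProductSpace.toDual ℝ (EuclideanSpace ℝ (Fin n))).symm f with hddef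
    have hdf : ∀ vv : EuclideanSpace ℝ (Fin n), ⟪d, vv⟫ = f vv := fun vv => by
      rw [hddef]; exact InnerProductSpace.toDual_symm_apply
    have hWlb : ∀ x ∈ Astar, u₀ < ⟪d, w x⟫ := by
      intro x hx
      rw [hdf]
      exact hfW _ (subset_convexHull ℝ W (Set.mem_image_of_mem w hx))
    have hdne : d ≠ 0 := by
      obtain ⟨x, hx⟩ := hAstarne
      intro hzero
      have h9 := hWlb x hx
      rw [hzero, inner_zero_left] at h9
      linarith
    have hdnorm : 0 < ‖d‖ := norm_pos_iff.mpr hdne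
    -- find a uniform margin η
    have hclaim : ∃ η : ℝ, 0 < η ∧ η ≤ lam/2 ∧
        ∀ x ∈ A, lam - η ≤ D tstar x → u₀ < ⟪d, w x⟫ := by
      by_contra hcon
      push_neg at hcon
      have hex : ∀ k : ℕ, ∃ x, x ∈ A ∧
          (lam - min (lam/2) (1/(k+1)) ≤ D tstar x) ∧ ⟪d, w x⟫ ≤ u₀ := by
        intro k
        obtain ⟨x, h1, h2, h3⟩ := hcon (min (lam/2) (1/(k+1)))
          (lt_min (by linarith) (by positivity)) (min_le_left _ _)
        exact ⟨x, h1, h2, h3⟩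
      choose xs hxsA hxsD hxsw using hex
      obtain ⟨xl, hxlA, φ, hφ, hφt⟩ := hA.tendsto_subseq hxsA
      have hDt : Filter.Tendsto (fun k => D tstar (xs (φ k))) Filter.atTop
          (nhds (D tstar xl)) := ((hDcont tstar).continuousAt).tendsto.comp hφt
      have h1d : Filter.Tendsto (fun k : ℕ => (1:ℝ)/(k+1)) Filter.atTop (nhds 0) :=
        tendsto_one_div_add_atTop_nhds_zero_nat
      have h2d : Filter.Tendsto (fun k : ℕ => (1:ℝ)/(φ k+1)) Filter.atTop (nhds 0) :=
        h1d.comp hφ.tendsto_atTop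
      have hmin0 : Filter.Tendsto (fun k : ℕ => min (lam/2) ((1:ℝ)/(φ k+1)))
          Filter.atTop (nhds 0) := by
        refine tendsto_of_tendsto_of_tendsto_of_le_of_le (g := fun _ : ℕ => (0:ℝ))
          tendsto_const_nhds h2d (fun k => ?_) (fun k => ?_)
        · exact le_min (by linarith) (by positivity)
        · exact min_le_right _ _
      have hlow : Filter.Tendsto (fun k : ℕ => lam - min (lam/2) ((1:ℝ)/(φ k+1)))
          Filter.atTop (nhds lam) := by
        have hconst : Filter.Tendsto (fun _ : ℕ => lam) Filter.atTop (nhds lam) :=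
          tendsto_const_nhds
        have h := hconst.sub hmin0
        rwa [sub_zero] at h
      have hDge : lam ≤ D tstar xl :=
        le_of_tendsto_of_tendsto' hlow hDt (fun k => hxsD (φ k))
      have hDlam : D tstar xl = lam := le_antisymm (hgle tstar xl hxlA) hDge
      have hct : ContinuousAt w xl := hwcontAt xl (by rw [hDlam]; exact ne_of_gt hlampos)
      have hipct : ContinuousAt (fun x : EuclideanSpace ℝ (Fin n) => ⟪d, w x⟫) xl :=
        ContinuousAt.inner continuousAt_const hct
      have hwt : Filter.Tendsto (fun k => ⟪d, w (xs (φ k))⟫) Filter.atTop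
          (nhds ⟪d, w xl⟫) := hipct.tendsto.comp hφt
      have hle : ⟪d, w xl⟫ ≤ u₀ :=
        le_of_tendsto hwt (Filter.Eventually.of_forall (fun k => hxsw (φ k)))
      exact absurd (hWlb xl ⟨hxlA, hDlam⟩) (not_lt.mpr hle)
    obtain ⟨η, hη0, hη2, hηp⟩ := hclaim
    set ε := min (lam * u₀ / (2 * ‖d‖^2 + 1)) (η / (2*‖d‖ + 1)) with hε
    have hε0 : 0 < ε := lt_min (by positivity) (by positivity)
    have hε1 : ε * ‖d‖^2 ≤ lam * u₀ / 2 := by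
      have h1 : ε ≤ lam * u₀ / (2*‖d‖^2+1) := min_le_left _ _
      have h2 := mul_le_mul_of_nonneg_right h1 (sq_nonneg ‖d‖)
      refine h2.trans ?_
      rw [div_mul_eq_mul_div, div_le_div_iff₀ (by positivity) (by norm_num)]
      nlinarith [sq_nonneg ‖d‖, mul_pos hlampos hu₀]
    have hε2 : ε * ‖d‖ ≤ η / 2 := by
      have h1 : ε ≤ η/(2*‖d‖+1) := min_le_right _ _
      have h2 := mul_le_mul_of_nonneg_right h1 (norm_nonneg d)
      refine h2.trans ?_
      rw [div_mul_eq_mul_div, div_le_div_iff₀ (by positivity) (by norm_num)]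
      nlinarith [norm_nonneg d, hη0]
    set tnew := tstar + ε • d with htnew
    set β := Real.sqrt (lam^2 - ε * lam * u₀ / 2) with hβ
    have hβlt : β < lam := by
      rw [hβ]
      refine (Real.sqrt_lt' hlampos).mpr ?_
      nlinarith [mul_pos (mul_pos hε0 hlampos) hu₀]
    have hbound : ∀ x ∈ A, D tnew x ≤ max β (lam - η/2) := by
      intro x hx
      by_cases hnear : lam - η ≤ D tstar x
      · have hwx := hηp x hx hnear
        have hDpos : 0 < D tstar x := by linarith
        set y := x - tstar with hy
        set p := pC y with hpdef
        have hyp : D tstar x = ‖y - p‖ := hDnorm x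
        have hnz : ‖y - p‖ ≠ 0 := by rw [← hyp]; exact ne_of_gt hDpos
        have hsp : y - p = ‖y - p‖ • w x := by
          have := hsplit x (ne_of_gt hDpos)
          rw [← hy, ← hpdef] at this
          exact this
        have hinner : ⟪y - p, d⟫ = ‖y - p‖ * ⟪d, w x⟫ := by
          conv_lhs => rw [hsp]
          rw [real_inner_smul_left, real_inner_comm]
        have hxt : x - tnew = y - ε • d := by rw [htnew, hy]; abel
        have h1 : D tnew x ≤ ‖(y - p) - ε • d‖ := by
          have h2 : D tnew x ≤ dist (x - tnew) p := Metric.infDist_le_dist_of_mem (hpC y)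
          rw [hxt, dist_eq_norm] at h2
          have h3 : y - ε • d - p = (y - p) - ε • d := by abel
          rwa [h3] at h2
        have hD_le : ‖y - p‖ ≤ lam := by rw [← hyp]; exact hgle tstar x hx
        have hD_ge : lam/2 ≤ ‖y - p‖ := by rw [← hyp]; linarith
        have hin : (lam/2) * u₀ ≤ ⟪y - p, d⟫ := by
          rw [hinner]
          have : 0 < ⟪d, w x⟫ := lt_trans hu₀ hwx
          nlinarith [hD_ge, hwx, hu₀, hlampos]
        have hsq : ‖(y - p) - ε • d‖^2 ≤ lam^2 - ε*lam*u₀/2 := by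
          rw [norm_sub_sq_real, real_inner_smul_right, norm_smul, Real.norm_eq_abs,
            abs_of_pos hε0, mul_pow]
          have hnn : ‖y - p‖^2 ≤ lam^2 := by nlinarith [norm_nonneg (y - p)]
          nlinarith [hε1, hε0, hin, hlampos, hu₀]
        have hle : D tnew x ≤ β := by
          refine h1.trans ?_
          rw [hβ]
          rw [show ‖(y-p) - ε • d‖ = Real.sqrt (‖(y-p) - ε • d‖^2) from
            (Real.sqrt_sq (norm_nonneg _)).symm]
          exact Real.sqrt_le_sqrt hsq
        exact hle.trans (le_max_left _ _)
      · push_neg at hnear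
        have h1 : D tnew x ≤ D tstar x + dist (x - tnew) (x - tstar) :=
          Metric.infDist_le_infDist_add_dist
        have h2 : dist (x - tnew) (x - tstar) = ε * ‖d‖ := by
          rw [dist_eq_norm]
          have h3 : (x - tnew) - (x - tstar) = -(ε • d) := by rw [htnew]; abel
          rw [h3, norm_neg, norm_smul, Real.norm_eq_abs, abs_of_pos hε0]
        rw [h2] at h1
        have : D tnew x ≤ lam - η/2 := by linarith [hε2]
        exact this.trans (le_max_right _ _)
    have hgnew : g tnew ≤ max β (lam - η/2) := by
      obtain ⟨x, hx, hval⟩ := hgmax tnew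
      rw [hval]
      exact hbound x hx
    have hmaxlt : max β (lam - η/2) < lam := max_lt hβlt (by linarith)
    have hfin := hglobal tnew
    linarith


end HidingProof

open HidingProof in
theorem hiding_volume_bound {n : ℕ} (hn : 2 ≤ n)
    (A B : Set (EuclideanSpace ℝ (Fin n)))
    (hAcp : IsCompact A) (hAcv : Convex ℝ A) (hAint : (interior A).Nonempty)
    (hBcp : IsCompact B) (hBcv : Convex ℝ B) (hBint : (interior B).Nonempty)
    (hAB : HidesBehind A B) :
    volume A ≤ ENNReal.ofReal (((n : ℝ) / ((n : ℝ) - 1)) ^ n) * volume B := by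
  classical
  have hAne : A.Nonempty := by
    obtain ⟨x, hx⟩ := hAint
    exact ⟨x, interior_subset hx⟩
  have hBne : B.Nonempty := by
    obtain ⟨x, hx⟩ := hBint
    exact ⟨x, interior_subset hx⟩
  have hN2 : (2:ℝ) ≤ (n:ℝ) := by exact_mod_cast hn
  set r : ℝ := (n:ℝ)/((n:ℝ)-1) with hr
  have hr0 : 0 ≤ r := div_nonneg (by linarith) (by linarith)
  set C : Set (EuclideanSpace ℝ (Fin n)) := r • B with hCdef
  have hCcp : IsCompact C := hBcp.smul r
  have hCne : C.Nonempty := hBne.smul_set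
  have hCconv : Convex ℝ C := hBcv.smul r
  have hyp := hyp_of_hides hAne hBcp hAB
  have key : ∀ z : Fin (n+1) → EuclideanSpace ℝ (Fin n), ∑ i, z i = 0 →
      ∑ i, sF A (z i) ≤ ∑ i, sF C (z i) := by
    intro z hz
    have h1 := core hn hAcp hAne hBcp hBne hyp z hz
    have h2 : ∑ i, sF C (z i) = r * ∑ i, sF B (z i) := by
      rw [Finset.mul_sum]
      exact Finset.sum_congr rfl (fun i _ => sF_smulset hBcp hBne hr0 (z i))
    rw [h2]
    exact h1
  obtain ⟨t, ht⟩ := exists_translate hAcp hAne hCcp hCne hCconv key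
  calc volume A ≤ volume (t +ᵥ C) := measure_mono ht
    _ = volume C := by rw [measure_vadd]
    _ = ENNReal.ofReal (r ^ n) * volume B := by
        rw [hCdef, Measure.addHaar_smul, finrank_euclideanSpace_fin,
          abs_of_nonneg (pow_nonneg hr0 n)]
    _ = ENNReal.ofReal (((n : ℝ) / ((n : ℝ) - 1)) ^ n) * volume B := by rw [hr]
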